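/- Let G be a countably infinite group, (F_n) a left Følner sequence in G, H a compact metrizable topological group with normalized Haar probability measure ν, and τ : G → H an injective group homomorphism with dense image. Then for all subsets A, B ⊆ H, limsup_{n→∞} (1/#F_n) · #{g ∈ F_n : x_A(g) ≠ x_B(g)} ≤ ν(closure(A Δ B)). In particular, the map A ↦ x_A is continuous from subsets of H with the pseudometric D̄(A,B) = ν(closure(A Δ B)) to {0,1}^G with the Besicovitch pseudometric D_F. -/

import Mathlib

open MeasureTheory Filter Set Topology
open scoped symmDiff ENNReal

/-- Extended logarithm of an `ℝ≥0∞` value, with `eLog 0 = ⊥` and `eLog ⊤ = ⊤`. -/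
noncomputable def eLog (x : ℝ≥0∞) : EReal :=
  if x = 0 then ⊥ else if x = ⊤ then ⊤ else ((Real.log x.toReal : ℝ) : EReal)

/-- Maximal cardinality (in `ℝ≥0∞`) of an `ε`-separated subset of `S` w.r.t. `d`. -/
noncomputable def sepCount {Z : Type*} (S : Set Z) (d : Z → Z → ℝ) (ε : ℝ) : ℝ≥0∞ :=
  ⨆ (A : Finset Z) (_ : ↑A ⊆ S ∧ (A : Set Z).Pairwise fun z z' => ε ≤ d z z'), (A.card : ℝ≥0∞)

/-- The quantity `log Sep(S, d, ε) / (- log ε)`, as an extended real. -/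
noncomputable def acRatio {Z : Type*} (S : Set Z) (d : Z → Z → ℝ) (ε : ℝ) : EReal :=
  eLog (sepCount S d ε) * (((-Real.log ε)⁻¹ : ℝ) : EReal)

open Classical in
/-- `F` is a left Følner sequence in the group `G`. -/
def IsFolner {G : Type*} [Group G] (F : ℕ → Finset G) : Prop :=
  (∀ n, (F n).Nonempty) ∧ ∀ g : G,
    Filter.Tendsto
      (fun n => ((((F n).image fun h => g * h) ∆ F n).card : ℝ) / ((F n).card : ℝ))
      Filter.atTop (nhds 0)

/-- The Besicovitch pseudometric w.r.t. the sequence `F`. -/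
noncomputable def besicovitchDist {G : Type*} (F : ℕ → Finset G) (x y : G → Bool) : ℝ :=
  Filter.limsup (fun n => (((F n).filter fun g => x g ≠ y g).card : ℝ) / ((F n).card : ℝ))
    Filter.atTop

open Classical in
/-- The symbolic model set (as a 0-1 array) associated to a window `W ⊆ H`. -/
noncomputable def modelSet {G H : Type*} (τ : G → H) (W : Set H) : G → Bool :=
  fun g => decide (τ g ∈ W)

/-- Orbit closure of `x` under the left shift `(g·x)(h) = x(hg)`, in the product topology. -/
def shiftOrbitClosure {G : Type*} [Group G] (x : G → Bool) : Set (G → Bool) :=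
  closure { y : G → Bool | ∃ g : G, y = fun h => x (h * g) }

/-- `Per(x, Γ, α)`, the set of `Γ`-periodic positions of `x` with value `α`. -/
def perA {G : Type*} [Group G] (x : G → Bool) (Γ : Subgroup G) (α : Bool) : Set G :=
  { g : G | ∀ γ ∈ Γ, x (g * γ) = α }

/-- `Per(x, Γ) = Per(x,Γ,0) ∪ Per(x,Γ,1)`. -/
def perSet {G : Type*} [Group G] (x : G → Bool) (Γ : Subgroup G) : Set G :=
  perA x Γ false ∪ perA x Γ true

/-- `E` is a fundamental domain of `G/Γ`: `g ↦ gΓ` is a bijection from `E` onto `G/Γ`. -/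
def IsFundDom {G : Type*} [Group G] (Γ : Subgroup G) (E : Finset G) : Prop :=
  ∀ g : G, ∃! d, d ∈ E ∧ g⁻¹ * d ∈ Γ

/-- The density `D(x,Γ)` of `Per(x,Γ)` computed in a fundamental domain `E`. -/
noncomputable def perDensity {G : Type*} [Group G] (x : G → Bool) (Γ : Subgroup G)
    (E : Finset G) : ℝ :=
  (((E : Set G) ∩ perSet x Γ).ncard : ℝ) / (E.card : ℝ)

/-- The regularity constant `𝒟(x)`. -/
noncomputable def regConst {G : Type*} [Group G] (x : G → Bool) : ℝ :=
  sSup { r : ℝ | ∃ (Γ : Subgroup G) (E : Finset G),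
    Γ.FiniteIndex ∧ IsFundDom Γ E ∧ r = perDensity x Γ E }

lemma abs_sum_sub_sum_le' {α : Type*} [DecidableEq α] (s t : Finset α) (u : α → ℝ)
    (hu : ∀ a, |u a| ≤ 1) : |∑ a ∈ s, u a - ∑ a ∈ t, u a| ≤ ((s ∆ t).card : ℝ) := by
  have key : ∑ a ∈ s, u a - ∑ a ∈ t, u a = ∑ a ∈ s \ t, u a - ∑ a ∈ t \ s, u a := by
    rw [← Finset.sum_inter_add_sum_sdiff s t u, ← Finset.sum_inter_add_sum_sdiff t s u,
      Finset.inter_comm]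
    ring
  rw [key]
  have h1 : ∀ (w : Finset α), |∑ a ∈ w, u a| ≤ (w.card : ℝ) := by
    intro w
    calc |∑ a ∈ w, u a| ≤ ∑ a ∈ w, |u a| := Finset.abs_sum_le_sum_abs _ _
    _ ≤ ∑ _a ∈ w, (1:ℝ) := Finset.sum_le_sum fun a _ => hu a
    _ = (w.card : ℝ) := by simp
  have hcard : (s ∆ t).card = (s \ t).card + (t \ s).card := by
    rw [symmDiff_def, Finset.sup_eq_union]
    exact Finset.card_union_of_disjoint (disjoint_sdiff_sdiff)
  calc |∑ a ∈ s \ t, u a - ∑ a ∈ t \ s, u a|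
      ≤ |∑ a ∈ s \ t, u a| + |∑ a ∈ t \ s, u a| := abs_sub _ _
    _ ≤ ((s \ t).card : ℝ) + ((t \ s).card : ℝ) := add_le_add (h1 _) (h1 _)
    _ = ((s ∆ t).card : ℝ) := by rw [hcard]; push_cast; ring

lemma haar_rightInvariant {H : Type*} [Group H] [TopologicalSpace H] [IsTopologicalGroup H]
    [CompactSpace H] [TopologicalSpace.MetrizableSpace H] [MeasurableSpace H] [BorelSpace H]
    (ν : Measure H) [ν.IsHaarMeasure] [IsProbabilityMeasure ν] : ν.IsMulRightInvariant := by
  letI : MetricSpace H := TopologicalSpace.metrizableSpaceMetric H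
  constructor
  intro g
  set μ' := Measure.map (· * g) ν with hμ'
  haveI : IsProbabilityMeasure μ' := Measure.isProbabilityMeasure_map (measurable_mul_const g).aemeasurable
  haveI : μ'.IsMulLeftInvariant := MeasureTheory.isMulLeftInvariant_map_mul_right (μ := ν) g
  have h := Measure.isMulInvariant_eq_smul_of_compactSpace μ' ν
  have huniv : (1:ℝ≥0∞) = (Measure.haarScalarFactor μ' ν : ℝ≥0∞) := by
    conv_lhs => rw [← measure_univ (μ := μ'), h]
    simp only [Measure.smul_apply, measure_univ, ENNReal.smul_def, smul_eq_mul, mul_one]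
  have hc : Measure.haarScalarFactor μ' ν = 1 := by
    exact_mod_cast huniv.symm
  rw [h, hc, one_smul]


/-- The Besicovitch pseudodistance of two symbolic model sets is bounded by
`ν(closure (A ∆ B))`; in particular `Φ : A ↦ x_A` is continuous from `D̄` to `D_F`. -/
theorem stmt_2 {G : Type*} [Group G] [Countable G] [Infinite G]
    {H : Type*} [Group H] [TopologicalSpace H] [IsTopologicalGroup H]
    [CompactSpace H] [TopologicalSpace.MetrizableSpace H] [MeasurableSpace H] [BorelSpace H]
    (ν : Measure H) [ν.IsHaarMeasure] [IsProbabilityMeasure ν]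
    (τ : G →* H) (hinj : Function.Injective ⇑τ) (hdense : DenseRange ⇑τ)
    (F : ℕ → Finset G) (hF : IsFolner F) (A B : Set H) :
    besicovitchDist F (modelSet (⇑τ) A) (modelSet (⇑τ) B) ≤ (ν (closure (A ∆ B))).toReal := by
  classical
  letI : MetricSpace H := TopologicalSpace.metrizableSpaceMetric H
  haveI hRI : ν.IsMulRightInvariant := haar_rightInvariant ν
  obtain ⟨hFne, hFconv⟩ := hF
  set C : Set H := closure (A ∆ B) with hCdef
  have hCclosed : IsClosed C := isClosed_closure
  have hNpos : ∀ n, (0:ℝ) < ((F n).card : ℝ) := fun n => by exact_mod_cast (hFne n).card_pos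
  refine _root_.le_of_forall_pos_le_add fun ε hε => ?_
  -- choose an open superset U of C with measure close to that of C
  have hCfin : ν C ≠ ⊤ := (measure_lt_top ν C).ne
  have hlt : ν C < ν C + ENNReal.ofReal (ε/4) := by
    refine ENNReal.lt_add_right hCfin ?_
    simp only [ne_eq, ENNReal.ofReal_eq_zero, not_le]
    linarith
  obtain ⟨U, hCU, hUopen, hUlt⟩ := C.exists_isOpen_lt_of_lt _ hlt
  have hνU : (ν U).toReal ≤ (ν C).toReal + ε/4 := by
    have h := ENNReal.toReal_mono (by finiteness) hUlt.le
    rwa [ENNReal.toReal_add hCfin (by finiteness), ENNReal.toReal_ofReal (by linarith)] at h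
  -- Urysohn function
  obtain ⟨f, hf0, hf1, hf01⟩ := exists_continuous_zero_one_of_isClosed
      (isClosed_compl_iff.mpr hUopen) hCclosed (disjoint_compl_left_iff_subset.mpr hCU)
  have hfabs : ∀ x, |f x| ≤ 1 := fun x => abs_le.2 ⟨by linarith [(hf01 x).1], (hf01 x).2⟩
  have hfnn : ∀ x, 0 ≤ f x := fun x => (hf01 x).1
  have hfint : Integrable (fun x => f x) ν :=
    f.continuous.integrable_of_hasCompactSupport (HasCompactSupport.of_compactSpace _)
  have hIf : ∫ x, f x ∂ν ≤ (ν U).toReal := by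
    have hind : Integrable (U.indicator fun _ => (1:ℝ)) ν :=
      (integrable_const (1:ℝ)).indicator hUopen.measurableSet
    have hle : ∀ x, f x ≤ U.indicator (fun _ => (1:ℝ)) x := by
      intro x
      by_cases hx : x ∈ U
      · rw [Set.indicator_of_mem hx]; exact (hf01 x).2
      · rw [Set.indicator_of_notMem hx]; exact le_of_eq (hf0 hx)
    calc ∫ x, f x ∂ν ≤ ∫ x, U.indicator (fun _ => (1:ℝ)) x ∂ν := integral_mono hfint hind hle
      _ = (ν U).toReal := by
          rw [integral_indicator_const (1:ℝ) hUopen.measurableSet]; simp; rfl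
  set δ : ℝ := ε/4 with hδdef
  have hδpos : 0 < δ := by rw [hδdef]; linarith
  -- uniform continuity of f
  obtain ⟨V, hVopen, hV1, hVprop⟩ : ∃ V : Set H, IsOpen V ∧ (1:H) ∈ V ∧
      (∀ u v : H, u * v⁻¹ ∈ V → |f u - f v| ≤ δ) := by
    have hWopen : IsOpen {p : H × H | |f (p.1 * p.2) - f p.2| < δ} := by
      have hcont : Continuous fun p : H × H => |f (p.1 * p.2) - f p.2| := by
        apply Continuous.abs
        exact (f.continuous.comp (continuous_fst.mul continuous_snd)).sub
          (f.continuous.comp continuous_snd)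
      exact isOpen_lt hcont continuous_const
    have hsub : ({1} : Set H) ×ˢ (univ : Set H) ⊆ {p : H × H | |f (p.1 * p.2) - f p.2| < δ} := by
      rintro ⟨a, b⟩ ⟨ha, -⟩
      simp only [mem_singleton_iff] at ha
      simp [ha, hδpos]
    obtain ⟨V, W, hVopen, hWopen', h1V, hunivW, hVW⟩ :=
      generalized_tube_lemma isCompact_singleton isCompact_univ hWopen hsub
    refine ⟨V, hVopen, h1V rfl, ?_⟩
    intro u v huv
    have hmem : (u * v⁻¹, v) ∈ V ×ˢ W := ⟨huv, hunivW (mem_univ v)⟩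
    have := hVW hmem
    simp only [mem_setOf_eq] at this
    rw [inv_mul_cancel_right] at this
    exact this.le
  -- finite subcover by translates
  have hOopen : ∀ g : G, IsOpen {h : H | τ g * h⁻¹ ∈ V} := fun g =>
    hVopen.preimage ((continuous_const.mul continuous_inv))
  obtain ⟨T, hTcover⟩ := (isCompact_univ (X := H)).elim_finite_subcover
      (fun g : G => {h : H | τ g * h⁻¹ ∈ V}) hOopen (by
        intro h _
        rw [mem_iUnion]
        have hopen : IsOpen {u : H | u * h⁻¹ ∈ V} := hVopen.preimage (continuous_mul_right h⁻¹)
        have hne : {u : H | u * h⁻¹ ∈ V}.Nonempty := ⟨h, by simp [hV1]⟩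
        obtain ⟨g, hg⟩ := hdense.exists_mem_open hopen hne
        exact ⟨g, hg⟩)
  -- averages
  set ψ : ℕ → H → ℝ := fun n h => (∑ g ∈ F n, f (h * τ g)) / ((F n).card : ℝ) with hψdef
  have hψcont : ∀ n, Continuous (ψ n) := by
    intro n
    apply Continuous.div_const
    exact continuous_finset_sum _ fun g _ => f.continuous.comp (continuous_mul_right (τ g))
  have hψint : ∀ n, Integrable (ψ n) ν := fun n =>
    (hψcont n).integrable_of_hasCompactSupport (HasCompactSupport.of_compactSpace _)
  have hψavg : ∀ n, ∫ h, ψ n h ∂ν = ∫ x, f x ∂ν := by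
    intro n
    simp only [hψdef]
    rw [integral_div, integral_finset_sum _ (fun g _ =>
      show Integrable (fun a => f (a * τ g)) ν from
      ((f.continuous.comp (continuous_mul_right (τ g))).integrable_of_hasCompactSupport
        (HasCompactSupport.of_compactSpace _)))]
    have hterm : ∀ g ∈ F n, ∫ a, f (a * τ g) ∂ν = ∫ x, f x ∂ν := fun g _ =>
      integral_mul_right_eq_self (μ := ν) (fun x => f x) (τ g)
    rw [Finset.sum_congr rfl hterm]
    rw [Finset.sum_const, nsmul_eq_mul,
      mul_div_cancel_left₀ _ (hNpos n).ne']
  set e : ℕ → G → ℝ := fun n g =>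
    ((((F n).image fun h => g * h) ∆ F n).card : ℝ) / ((F n).card : ℝ) with hedef
  set s : ℕ → ℝ := fun n => ∑ g ∈ T, e n g with hsdef
  have henn : ∀ n g, 0 ≤ e n g := fun n g => div_nonneg (Nat.cast_nonneg _) (Nat.cast_nonneg _)
  have hbound1 : ∀ n (g0 : G), |ψ n (τ g0) - ψ n 1| ≤ e n g0 := by
    intro n g0
    have key : ∑ g ∈ F n, f (τ g0 * τ g) = ∑ g ∈ (F n).image fun h => g0 * h, f (τ g) := by
      rw [Finset.sum_image (fun a _ b _ h => mul_left_cancel h)]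
      exact Finset.sum_congr rfl fun g _ => by rw [map_mul τ g0 g]
    have h2 : |(∑ g ∈ (F n).image (fun h => g0*h), f (τ g)) - ∑ g ∈ F n, f (τ g)|
        ≤ ((((F n).image fun h => g0 * h) ∆ F n).card : ℝ) :=
      abs_sum_sub_sum_le' _ _ _ (fun g => hfabs _)
    have heq : ψ n (τ g0) - ψ n 1 =
        ((∑ g ∈ (F n).image (fun h => g0*h), f (τ g)) - ∑ g ∈ F n, f (τ g)) / ((F n).card : ℝ) := by
      simp only [hψdef, one_mul, key, div_sub_div_same]
    rw [heq, abs_div, abs_of_pos (hNpos n)]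
    simp only [hedef]
    exact (div_le_div_iff_of_pos_right (hNpos n)).2 h2
  have hbound2 : ∀ n (g0 : G) (h : H), τ g0 * h⁻¹ ∈ V → |ψ n (τ g0) - ψ n h| ≤ δ := by
    intro n g0 h hmem
    have heq : ψ n (τ g0) - ψ n h =
        (∑ g ∈ F n, (f (τ g0 * τ g) - f (h * τ g))) / ((F n).card : ℝ) := by
      simp only [hψdef, div_sub_div_same, Finset.sum_sub_distrib]
    rw [heq, abs_div, abs_of_pos (hNpos n), div_le_iff₀ (hNpos n)]
    calc |∑ g ∈ F n, (f (τ g0 * τ g) - f (h * τ g))|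
        ≤ ∑ g ∈ F n, |f (τ g0 * τ g) - f (h * τ g)| := Finset.abs_sum_le_sum_abs _ _
      _ ≤ ∑ _g ∈ F n, δ := Finset.sum_le_sum fun g _ => hVprop _ _ (by
            have : (τ g0 * τ g) * (h * τ g)⁻¹ = τ g0 * h⁻¹ := by group
            rw [this]; exact hmem)
      _ = δ * ((F n).card : ℝ) := by rw [Finset.sum_const, nsmul_eq_mul]; ring
  have hcomb : ∀ n (h : H), |ψ n 1 - ψ n h| ≤ δ + s n := by
    intro n h
    have hh := hTcover (mem_univ h)
    simp only [mem_iUnion, exists_prop] at hh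
    obtain ⟨g0, hg0T, hg0⟩ := hh
    have hes : e n g0 ≤ s n := Finset.single_le_sum (fun g _ => henn n g) hg0T
    calc |ψ n 1 - ψ n h| ≤ |ψ n 1 - ψ n (τ g0)| + |ψ n (τ g0) - ψ n h| := abs_sub_le _ _ _
      _ ≤ e n g0 + δ := add_le_add (by rw [abs_sub_comm]; exact hbound1 n g0)
          (hbound2 n g0 h hg0)
      _ ≤ δ + s n := by linarith
  have hψ1 : ∀ n, ψ n 1 ≤ (∫ x, f x ∂ν) + (δ + s n) := by
    intro n
    have hint : ∫ h, (ψ n 1 - ψ n h) ∂ν = ψ n 1 - ∫ x, f x ∂ν := by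
      rw [integral_sub (integrable_const _) (hψint n), integral_const, hψavg n]
      simp
    have hnorm : ‖∫ h, (ψ n 1 - ψ n h) ∂ν‖ ≤ (δ + s n) * (ν univ).toReal :=
      norm_integral_le_of_norm_le_const
        (Eventually.of_forall fun h => by rw [Real.norm_eq_abs]; exact hcomb n h)
    rw [hint, Real.norm_eq_abs, measure_univ, ENNReal.toReal_one, mul_one] at hnorm
    have := (abs_le.1 hnorm).2
    linarith
  have hdψ : ∀ n, (((F n).filter fun g => τ g ∈ C).card : ℝ) / ((F n).card : ℝ) ≤ ψ n 1 := by
    intro n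
    simp only [hψdef, one_mul]
    refine (div_le_div_iff_of_pos_right (hNpos n)).2 ?_
    calc (((F n).filter fun g => τ g ∈ C).card : ℝ)
        = ∑ _g ∈ (F n).filter fun g => τ g ∈ C, (1:ℝ) := by simp
      _ = ∑ g ∈ (F n).filter fun g => τ g ∈ C, f (τ g) :=
          Finset.sum_congr rfl fun g hg => by
            rw [Finset.mem_filter] at hg
            exact (hf1 hg.2).symm
      _ ≤ ∑ g ∈ F n, f (τ g) :=
          Finset.sum_le_sum_of_subset_of_nonneg (Finset.filter_subset _ _)
            (fun g _ _ => hfnn _)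
  have hcd : ∀ n, ((((F n).filter fun g =>
      modelSet (⇑τ) A g ≠ modelSet (⇑τ) B g).card : ℝ))
      ≤ (((F n).filter fun g => τ g ∈ C).card : ℝ) := by
    intro n
    have hsub : ((F n).filter fun g => modelSet (⇑τ) A g ≠ modelSet (⇑τ) B g)
        ⊆ ((F n).filter fun g => τ g ∈ C) := by
      intro g hg
      rw [Finset.mem_filter] at hg ⊢
      refine ⟨hg.1, subset_closure ?_⟩
      have hne : ¬(τ g ∈ A ↔ τ g ∈ B) := by
        simpa [modelSet, decide_eq_decide] using hg.2
      rw [Set.mem_symmDiff]; tauto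
    exact_mod_cast Finset.card_le_card hsub
  have hs0 : Tendsto s atTop (𝓝 0) := by
    have h := tendsto_finset_sum T (fun (g : G) (_ : g ∈ T) => hFconv g)
    simpa [hsdef, hedef] using h
  have hsev : ∀ᶠ n in atTop, s n ≤ ε/4 := hs0.eventually_le_const (by linarith)
  have hev : ∀ᶠ n in atTop, ((((F n).filter fun g =>
      modelSet (⇑τ) A g ≠ modelSet (⇑τ) B g).card : ℝ)) / ((F n).card : ℝ)
      ≤ (ν C).toReal + ε := by
    filter_upwards [hsev] with n hsn
    have h1 : ((((F n).filter fun g =>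
        modelSet (⇑τ) A g ≠ modelSet (⇑τ) B g).card : ℝ)) / ((F n).card : ℝ)
        ≤ (((F n).filter fun g => τ g ∈ C).card : ℝ) / ((F n).card : ℝ) := by
      exact (div_le_div_iff_of_pos_right (hNpos n)).2 (hcd n)
    have h2 := hdψ n
    have h3 := hψ1 n
    have hδ4 : δ = ε/4 := hδdef
    linarith
  have hcb : IsCoboundedUnder (· ≤ ·) atTop (fun n =>
      ((((F n).filter fun g => modelSet (⇑τ) A g ≠ modelSet (⇑τ) B g).card : ℝ))
      / ((F n).card : ℝ)) :=
    Filter.isCoboundedUnder_le_of_le atTop fun n =>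
      div_nonneg (Nat.cast_nonneg _) (Nat.cast_nonneg _)
  exact Filter.limsup_le_of_le hcb hev
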